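/- Let Q = T[H_1, ..., H_t] be a strongly connected semicomplete composition and k ≥ 4. Then Q has a k-kernel if and only if there is a vertex v ∈ V(Q), say v ∈ V(H_i), such that {v} is a (k−1)-absorbent set of Q − (V(H_i) \ {v}). -/
import Mathlib


/-- There is a directed walk (equivalently, path) of length at most `k` from `x` to `y`. -/
def KReach {V : Type*} (A : V → V → Prop) (k : ℕ) (x y : V) : Prop :=
  ∃ n : ℕ, n ≤ k ∧ ∃ f : ℕ → V, f 0 = x ∧ f n = y ∧ ∀ i < n, A (f i) (f (i + 1))

/-- `x` is a `k`-king: it reaches every vertex by a path of length at most `k`. -/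
def IsKKing {V : Type*} (A : V → V → Prop) (k : ℕ) (x : V) : Prop :=
  ∀ y : V, KReach A k x y

/-- A strict `k`-king: a `k`-king with some vertex at distance exactly `k`. -/
def IsStrictKKing {V : Type*} (A : V → V → Prop) (k : ℕ) (x : V) : Prop :=
  IsKKing A k x ∧ ∃ y : V, ¬ KReach A (k - 1) x y

/-- Strong connectivity of a digraph. -/
def Strong {V : Type*} (A : V → V → Prop) : Prop :=
  ∀ x y : V, ∃ k : ℕ, KReach A k x y

/-- Semicomplete digraph: at least one arc between any two distinct vertices. -/
def Semicomplete {V : Type*} (A : V → V → Prop) : Prop :=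
  ∀ x y : V, x ≠ y → A x y ∨ A y x

/-- Tournament: exactly one arc between any two distinct vertices, no loops. -/
def IsTournament {V : Type*} (A : V → V → Prop) : Prop :=
  Irreflexive A ∧ ∀ x y : V, x ≠ y → (A x y ↔ ¬ A y x)

/-- Out-degree of a vertex. -/
noncomputable def outDeg {V : Type*} (A : V → V → Prop) (x : V) : ℕ :=
  Set.ncard {y | A x y}

/-- There is a directed cycle of length exactly `k` through `x`. -/
def CycleThrough {V : Type*} (A : V → V → Prop) (k : ℕ) (x : V) : Prop :=
  ∃ f : ℕ → V, f 0 = x ∧ f k = x ∧ (∀ i < k, A (f i) (f (i + 1))) ∧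
    ∀ i j, i < k → j < k → f i = f j → i = j

/-- `x` belongs to a directed cycle of length at most `k`. -/
def OnShortCycle {V : Type*} (A : V → V → Prop) (k : ℕ) (x : V) : Prop :=
  ∃ n : ℕ, 2 ≤ n ∧ n ≤ k ∧ CycleThrough A n x

/-- `AQ` (on `W`) is the composition `T[H_1, …, H_t]` of digraphs over the digraph `AT`
(on index type `ι`), where the fiber of `π` over `i` is the vertex set of `H_i`
(each fiber is nonempty since `π` is surjective), the arcs of `H_i` are the arcs of
`AQ` inside the fiber over `i`, and arcs between different fibers are determined by `AT`. -/
structure IsComposition {ι W : Type*} (AT : ι → ι → Prop) (AQ : W → W → Prop)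
    (π : W → ι) : Prop where
  surj : Function.Surjective π
  cross : ∀ x y : W, π x ≠ π y → (AQ x y ↔ AT (π x) (π y))

/-- The digraph `H_i`: the induced subdigraph on the fiber of `π` over `i`. -/
def FiberArc {ι W : Type*} (AQ : W → W → Prop) (π : W → ι) (i : ι) :
    {w : W // π w = i} → {w : W // π w = i} → Prop :=
  fun a b => AQ a.1 b.1

/-- The induced subdigraph on the vertices satisfying `P`. -/
def DelArc {V : Type*} (A : V → V → Prop) (P : V → Prop) :
    {v : V // P v} → {v : V // P v} → Prop :=
  fun a b => A a.1 b.1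

/-- `{v}` is a `k`-absorbent set: every other vertex reaches `v` in at most `k` steps. -/
def SingletonAbsorbent {V : Type*} (A : V → V → Prop) (k : ℕ) (v : V) : Prop :=
  ∀ x : V, x ≠ v → KReach A k x v

/-- A quasi-kernel: an independent set `K` such that every vertex outside `K`
reaches some vertex of `K` by a path of length at most 2. -/
def QuasiKernel {V : Type*} (A : V → V → Prop) (K : Set V) : Prop :=
  (∀ x ∈ K, ∀ y ∈ K, x ≠ y → ¬ A x y) ∧ ∀ x ∉ K, ∃ y ∈ K, KReach A 2 x y

/-- A `k`-kernel: a `k`-independent and `(k-1)`-absorbent set. -/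
def KKernel {V : Type*} (A : V → V → Prop) (k : ℕ) (K : Set V) : Prop :=
  (∀ x ∈ K, ∀ y ∈ K, x ≠ y → ¬ KReach A (k - 1) x y) ∧
    ∀ x ∉ K, ∃ y ∈ K, KReach A (k - 1) x y

section Auxxx
variable {ι W V : Type*}

lemma kreach_mono' {A : V → V → Prop} {k m : ℕ} {x y : V}
    (h : KReach A k x y) (hkm : k ≤ m) : KReach A m x y := by
  obtain ⟨n, hn, f, h0, h1, h2⟩ := h
  exact ⟨n, hn.trans hkm, f, h0, h1, h2⟩

lemma kreach_refl' {A : V → V → Prop} (k : ℕ) (x : V) : KReach A k x x :=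
  ⟨0, Nat.zero_le _, fun _ => x, rfl, rfl, fun i hi => absurd hi (Nat.not_lt_zero i)⟩

lemma kreach_one' {A : V → V → Prop} {x y : V} (h : A x y) {k : ℕ} (hk : 1 ≤ k) :
    KReach A k x y :=
  ⟨1, hk, fun m => if m = 0 then x else y, by simp, by simp, by
    intro i hi
    interval_cases i
    simpa using h⟩

lemma kreach_two' {A : V → V → Prop} {x y z : V} (h1 : A x y) (h2 : A y z) {k : ℕ}
    (hk : 2 ≤ k) : KReach A k x z :=
  ⟨2, hk, fun m => if m = 0 then x else if m = 1 then y else z, by simp, by simp, by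
    intro i hi
    interval_cases i
    · simpa using h1
    · simpa using h2⟩

lemma kreach_three' {A : V → V → Prop} {x y z w : V} (h1 : A x y) (h2 : A y z)
    (h3 : A z w) {k : ℕ} (hk : 3 ≤ k) : KReach A k x w :=
  ⟨3, hk, fun m => if m = 0 then x else if m = 1 then y else if m = 2 then z else w,
    by simp, by simp, by
    intro i hi
    interval_cases i
    · simpa using h1
    · simpa using h2
    · simpa using h3⟩

lemma short_cycle' {AT : ι → ι → Prop} {AQ : W → W → Prop} {π : W → ι}
    (hne : ∃ a b : ι, a ≠ b)
    (hTirr : Irreflexive AT) (hsemi : Semicomplete AT)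
    (hcomp : IsComposition AT AQ π) (hstrong : Strong AQ) (i : ι) :
    ∃ j, AT i j ∧ (AT j i ∨ ∃ l, AT j l ∧ AT l i) := by
  classical
  have hout : ∃ j, AT i j := by
    obtain ⟨a, b, hab⟩ := hne
    obtain ⟨y, hy⟩ : ∃ y : ι, y ≠ i := by
      by_cases h : a = i
      · exact ⟨b, fun hc => hab (h.trans hc.symm)⟩
      · exact ⟨a, h⟩
    obtain ⟨x, hx⟩ := hcomp.surj i
    obtain ⟨w, hw⟩ := hcomp.surj y
    obtain ⟨K, n, hn, f, h0, h1, harc⟩ := hstrong x w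
    have hex : ∃ m, π (f m) ≠ i := ⟨n, by rw [h1, hw]; exact hy⟩
    have hms : π (f (Nat.find hex)) ≠ i := Nat.find_spec hex
    set m := Nat.find hex with hmdef
    have hm0 : m ≠ 0 := by
      intro hc
      rw [hc, h0, hx] at hms
      exact hms rfl
    have hmn : m ≤ n := Nat.find_le (by rw [h1, hw]; exact hy)
    have hprev : π (f (m - 1)) = i :=
      not_not.mp (Nat.find_min hex (by omega))
    have harc' : AQ (f (m - 1)) (f m) := by
      have h' := harc (m - 1) (by omega)
      have he : m - 1 + 1 = m := by omega
      rwa [he] at h'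
    have hcr : AT (π (f (m - 1))) (π (f m)) :=
      (hcomp.cross _ _ (by rw [hprev]; exact fun h => hms h.symm)).mp harc'
    rw [hprev] at hcr
    exact ⟨π (f m), hcr⟩
  by_contra hcon
  push_neg at hcon
  obtain ⟨j0, hj0⟩ := hout
  obtain ⟨x, hx⟩ := hcomp.surj i
  obtain ⟨w, hw⟩ := hcomp.surj j0
  obtain ⟨K, n, hn, f, h0, h1, harc⟩ := hstrong w x
  have hex : ∃ m, ¬ AT i (π (f m)) := ⟨n, by rw [h1, hx]; exact hTirr i⟩
  have hms : ¬ AT i (π (f (Nat.find hex))) := Nat.find_spec hex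
  set m := Nat.find hex with hmdef
  have hm0 : m ≠ 0 := by
    intro hc
    rw [hc, h0, hw] at hms
    exact hms hj0
  have hmn : m ≤ n := Nat.find_le (by rw [h1, hx]; exact hTirr i)
  have hprev : AT i (π (f (m - 1))) :=
    not_not.mp (Nat.find_min hex (by omega))
  have harc' : AQ (f (m - 1)) (f m) := by
    have h' := harc (m - 1) (by omega)
    have he : m - 1 + 1 = m := by omega
    rwa [he] at h'
  have hab : π (f (m - 1)) ≠ π (f m) := by
    intro hc
    exact hms (hc ▸ hprev)
  have hcr : AT (π (f (m - 1))) (π (f m)) := (hcomp.cross _ _ hab).mp harc'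
  set a := π (f (m - 1))
  set b := π (f m)
  have hcon' := hcon a hprev
  by_cases hbi : b = i
  · exact hcon'.1 (hbi ▸ hcr)
  · rcases hsemi b i hbi with h | h
    · exact hcon'.2 b hcr h
    · exact hms h

lemma samefiber' {AT : ι → ι → Prop} {AQ : W → W → Prop} {π : W → ι}
    (hne : ∃ a b : ι, a ≠ b)
    (hTirr : Irreflexive AT) (hsemi : Semicomplete AT)
    (hcomp : IsComposition AT AQ π) (hstrong : Strong AQ) (x v : W)
    (hxv : π x = π v) {k : ℕ} (hk : 3 ≤ k) : KReach AQ k x v := by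
  by_cases hxe : x = v
  · exact hxe ▸ kreach_refl' k x
  obtain ⟨j, hij, hcase⟩ := short_cycle' hne hTirr hsemi hcomp hstrong (π v)
  have hji : j ≠ π v := fun h => hTirr _ (h ▸ hij)
  obtain ⟨w1, hw1⟩ := hcomp.surj j
  have hx_w1 : AQ x w1 :=
    (hcomp.cross x w1 (by rw [hxv, hw1]; exact Ne.symm hji)).mpr
      (by rw [hxv, hw1]; exact hij)
  rcases hcase with hji' | ⟨l, hjl, hli⟩
  · have hw1v : AQ w1 v := (hcomp.cross w1 v (by rw [hw1]; exact hji)).mpr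
      (by rw [hw1]; exact hji')
    exact kreach_two' hx_w1 hw1v (by omega)
  · have hlne : l ≠ π v := fun h => hTirr _ (h ▸ hli)
    have hjl' : j ≠ l := fun h => hTirr _ (h ▸ hjl)
    obtain ⟨w2, hw2⟩ := hcomp.surj l
    have h12 : AQ w1 w2 := (hcomp.cross w1 w2 (by rw [hw1, hw2]; exact hjl')).mpr
      (by rw [hw1, hw2]; exact hjl)
    have h2v : AQ w2 v := (hcomp.cross w2 v (by rw [hw2]; exact hlne)).mpr
      (by rw [hw2]; exact hli)
    exact kreach_three' hx_w1 h12 h2v hk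

lemma lift_del' {A : V → V → Prop} {P : V → Prop} {k : ℕ} {a b : {v : V // P v}}
    (h : KReach (DelArc A P) k a b) : KReach A k a.1 b.1 := by
  obtain ⟨n, hn, f, h0, h1, harc⟩ := h
  exact ⟨n, hn, fun m => (f m).1, congrArg Subtype.val h0, congrArg Subtype.val h1, harc⟩

lemma reroute' {AT : ι → ι → Prop} {AQ : W → W → Prop} {π : W → ι}
    (hcomp : IsComposition AT AQ π) (v : W) {x : W} (hx : π x ≠ π v) {k : ℕ}
    (h : KReach AQ k x v) :
    KReach (DelArc AQ (fun w => π w = π v → w = v)) k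
      ⟨x, fun hc => absurd hc hx⟩ ⟨v, fun _ => rfl⟩ := by
  classical
  obtain ⟨n, hn, f, h0, h1, harc⟩ := h
  have hex : ∃ m, π (f m) = π v := ⟨n, by rw [h1]⟩
  have hms : π (f (Nat.find hex)) = π v := Nat.find_spec hex
  set m := Nat.find hex with hmdef
  have hmn : m ≤ n := Nat.find_le (by rw [h1])
  have hm0 : m ≠ 0 := by
    intro hc
    rw [hc, h0] at hms
    exact hx hms
  refine ⟨m, hmn.trans hn,
    fun l => if hl : l < m then ⟨f l, fun hc => absurd hc (Nat.find_min hex hl)⟩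
      else ⟨v, fun _ => rfl⟩, ?_, ?_, ?_⟩
  · simp only [dif_pos (Nat.pos_of_ne_zero hm0)]
    exact Subtype.ext h0
  · simp only [dif_neg (lt_irrefl m)]
  · intro l hl
    show AQ _ _
    simp only [dif_pos hl]
    by_cases hl1 : l + 1 < m
    · simp only [dif_pos hl1]
      exact harc l (by omega)
    · simp only [dif_neg hl1]
      have hlm : l + 1 = m := by omega
      have harc'' : AQ (f l) (f m) := hlm ▸ harc l (by omega)
      have hlv : π (f l) ≠ π v := Nat.find_min hex hl
      have hcr : AT (π (f l)) (π (f m)) :=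
        (hcomp.cross _ _ (by rw [hms]; exact hlv)).mp harc''
      rw [hms] at hcr
      exact (hcomp.cross (f l) v hlv).mpr hcr

end Auxxx

/-- A strong semicomplete composition has a `k`-kernel (`k ≥ 4`) iff there is a vertex
`v ∈ V(H_i)` such that `{v}` is `(k-1)`-absorbent in `Q − (V(H_i) \ {v})`. -/
theorem stmt18 {ι W : Type*} [Fintype ι] [Fintype W] (k : ℕ) (hk : 4 ≤ k)
    (AT : ι → ι → Prop) (AQ : W → W → Prop) (π : W → ι)
    (hcard : 2 ≤ Fintype.card ι)
    (hTirr : Irreflexive AT) (hQirr : Irreflexive AQ)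
    (hsemi : Semicomplete AT) (hcomp : IsComposition AT AQ π)
    (hstrong : Strong AQ) :
    (∃ K : Set W, KKernel AQ k K) ↔
      ∃ v : W, SingletonAbsorbent
        (DelArc AQ (fun w => π w = π v → w = v)) (k - 1)
        ⟨v, fun _ => rfl⟩ := by
  classical
  have hne : ∃ a b : ι, a ≠ b := Fintype.exists_pair_of_one_lt_card (by omega)
  constructor
  · rintro ⟨K, hind, habs⟩
    have hKv : ∀ y ∈ K, ∀ z ∈ K, y = z := by
      intro y hy z hz
      by_contra hyz
      by_cases hpi : π y = π z
      · exact hind y hy z hz hyz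
          (samefiber' hne hTirr hsemi hcomp hstrong y z hpi (by omega))
      · rcases hsemi (π y) (π z) hpi with h | h
        · exact hind y hy z hz hyz
            (kreach_one' ((hcomp.cross y z hpi).mpr h) (by omega))
        · exact hind z hz y hy (Ne.symm hyz)
            (kreach_one' ((hcomp.cross z y (Ne.symm hpi)).mpr h) (by omega))
    have hW : Nonempty W := by
      obtain ⟨a, b, -⟩ := hne
      obtain ⟨x, -⟩ := hcomp.surj a
      exact ⟨x⟩
    obtain ⟨v, hv⟩ : ∃ v, v ∈ K := by
      by_contra hc
      push_neg at hc
      obtain ⟨x⟩ := hW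
      obtain ⟨y, hy, -⟩ := habs x (hc x)
      exact hc y hy
    refine ⟨v, ?_⟩
    intro z hz
    have hz1 : z.1 ≠ v := fun hc => hz (Subtype.ext hc)
    have hzp : π z.1 ≠ π v := fun hc => hz1 (z.2 hc)
    have hzK : z.1 ∉ K := fun hc => hz1 (hKv z.1 hc v hv)
    obtain ⟨y, hy, hre⟩ := habs z.1 hzK
    have hyv : y = v := hKv y hy v hv
    subst hyv
    exact reroute' hcomp y hzp hre
  · rintro ⟨v, hv⟩
    refine ⟨{v}, ?_, ?_⟩
    · intro x hx y hy hxy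
      rw [Set.mem_singleton_iff] at hx hy
      exact absurd (hx.trans hy.symm) hxy
    · intro x hx
      rw [Set.mem_singleton_iff] at hx
      refine ⟨v, rfl, ?_⟩
      by_cases hpi : π x = π v
      · exact samefiber' hne hTirr hsemi hcomp hstrong x v hpi (by omega)
      · exact lift_del' (hv ⟨x, fun hc => absurd hc hpi⟩
          (fun hc => hx (congrArg Subtype.val hc)))
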